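/- Let g : ℝ → ℝ be any map such that g(x) = x whenever x < −10 or x > 1, and g(x) = T₁(x) for all x ∈ [−1, 1]. Then g maps K₊ into itself: g '' K₊ ⊆ K₊. -/
import Mathlib


noncomputable section

/-- The affine contraction of ratio 1/100 fixing 0. -/
def T0 (x : ℝ) : ℝ := x / 100

/-- The affine contraction of ratio 1/100 fixing 1. -/
def T1 (x : ℝ) : ℝ := 1 + (x - 1) / 100

/-- The affine contraction of ratio 1/100 fixing -1. -/
def Tm1 (x : ℝ) : ℝ := -1 + (x + 1) / 100

/-- The inverse of `T0`. -/
def T0inv (x : ℝ) : ℝ := 100 * x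

/-- The `i`-th iterate of `T0` for `i ≥ 0`, and the `|i|`-th iterate of
`T0⁻¹ : x ↦ 100 x` for `i < 0`. -/
def T0z : ℤ → ℝ → ℝ
  | Int.ofNat n => T0^[n]
  | Int.negSucc n => T0inv^[n + 1]

/-- The set `K₊ = {0} ∪ ⋃ i ∈ ℤ, T₀^[i] '' (C₁ ∪ C₋₁)` where `C₁ = T₁ '' C`,
`C₋₁ = T₋₁ '' C`. -/
def Kplus (C : Set ℝ) : Set ℝ := {0} ∪ ⋃ i : ℤ, T0z i '' (T1 '' C ∪ Tm1 '' C)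

lemma T0_iter (n : ℕ) (x : ℝ) : T0^[n] x = x / 100 ^ n := by
  induction n with
  | zero => simp
  | succ n ih => rw [Function.iterate_succ_apply', ih, T0, pow_succ]; ring

lemma T0inv_iter (n : ℕ) (x : ℝ) : T0inv^[n] x = 100 ^ n * x := by
  induction n with
  | zero => simp
  | succ n ih => rw [Function.iterate_succ_apply', ih, T0inv, pow_succ]; ring

lemma mem_Kplus_of_mem_C1 (C : Set ℝ) {x : ℝ} (hx : x ∈ T1 '' C ∪ Tm1 '' C) :
    x ∈ Kplus C :=
  Or.inr (Set.mem_iUnion.2 ⟨0, ⟨x, hx, rfl⟩⟩)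

theorem stmt_12 (C : Set ℝ) (hne : C.Nonempty) (hcomp : IsCompact C)
    (hself : C = Tm1 '' C ∪ T0 '' C ∪ T1 '' C)
    (g : ℝ → ℝ)
    (hg_id : ∀ x : ℝ, x < -10 ∨ 1 < x → g x = x)
    (hg_T1 : ∀ x ∈ Set.Icc (-1 : ℝ) 1, g x = T1 x) :
    g '' Kplus C ⊆ Kplus C := by
  have hT0 : T0 '' C ⊆ C := by intro x hx; rw [hself]; exact Or.inl (Or.inr hx)
  have hT1s : T1 '' C ⊆ C := by intro x hx; rw [hself]; exact Or.inr hx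
  have hTm1s : Tm1 '' C ⊆ C := by intro x hx; rw [hself]; exact Or.inl (Or.inl hx)
  have hbdd := hcomp.bddAbove
  have hbdd' := hcomp.bddBelow
  -- C ⊆ [-1, 1]
  have hMle : sSup C ≤ 1 := by
    have hM : sSup C ∈ Tm1 '' C ∪ T0 '' C ∪ T1 '' C := by
      rw [← hself]; exact hcomp.sSup_mem hne
    rcases hM with (⟨y, hy, hEq⟩ | ⟨y, hy, hEq⟩) | ⟨y, hy, hEq⟩ <;>
      have hle : y ≤ sSup C := le_csSup hbdd hy <;>
      simp only [Tm1, T0, T1] at hEq <;> linarith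
  have hmge : (-1 : ℝ) ≤ sInf C := by
    have hM : sInf C ∈ Tm1 '' C ∪ T0 '' C ∪ T1 '' C := by
      rw [← hself]; exact hcomp.sInf_mem hne
    rcases hM with (⟨y, hy, hEq⟩ | ⟨y, hy, hEq⟩) | ⟨y, hy, hEq⟩ <;>
      have hle : sInf C ≤ y := csInf_le hbdd' hy <;>
      simp only [Tm1, T0, T1] at hEq <;> linarith
  have hsub : C ⊆ Set.Icc (-1 : ℝ) 1 := fun x hx =>
    ⟨le_trans hmge (csInf_le hbdd' hx), le_trans (le_csSup hbdd hx) hMle⟩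
  -- 0 ∈ C
  have h0 : (0 : ℝ) ∈ C := by
    obtain ⟨x₀, hx₀⟩ := hne
    have hmem : ∀ n, T0^[n] x₀ ∈ C := by
      intro n
      induction n with
      | zero => simpa
      | succ n ih => rw [Function.iterate_succ_apply']; exact hT0 ⟨_, ih, rfl⟩
    have htend : Filter.Tendsto (fun n => T0^[n] x₀) Filter.atTop (nhds 0) := by
      simp only [T0_iter]
      have h2 : Filter.Tendsto (fun n : ℕ => x₀ * (1 / 100 : ℝ) ^ n)
          Filter.atTop (nhds 0) := by
        simpa using
          (tendsto_pow_atTop_nhds_zero_of_lt_one (r := (1/100:ℝ)) (by norm_num) (by norm_num)).const_mul x₀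
      convert h2 using 2 with n
      rw [div_eq_mul_inv, ← inv_pow]
      norm_num
    exact hcomp.isClosed.mem_of_tendsto htend (Filter.Eventually.of_forall hmem)
  -- main argument
  rintro _ ⟨x, hx, rfl⟩
  have hSsub : T1 '' C ∪ Tm1 '' C ⊆ C := Set.union_subset hT1s hTm1s
  rcases hx with hx0 | hx
  · -- x = 0
    rcases hx0 with rfl
    rw [hg_T1 0 (by norm_num)]
    exact mem_Kplus_of_mem_C1 C (Or.inl ⟨0, h0, rfl⟩)
  · obtain ⟨_, ⟨i, rfl⟩, y, hy, rfl⟩ := hx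
    match i with
    | Int.ofNat n =>
      -- T0z (ofNat n) = T0^[n]
      have hxC : T0z (Int.ofNat n) y ∈ C := by
        show T0^[n] y ∈ C
        induction n with
        | zero => exact hSsub hy
        | succ n ih => rw [Function.iterate_succ_apply']; exact hT0 ⟨_, ih, rfl⟩
      rw [hg_T1 _ (hsub hxC)]
      exact mem_Kplus_of_mem_C1 C (Or.inl ⟨_, hxC, rfl⟩)
    | Int.negSucc n =>
      have hxval : T0z (Int.negSucc n) y = 100 ^ (n + 1) * y := by
        show T0inv^[n + 1] y = _
        rw [T0inv_iter]
      have hpow : (1 : ℝ) ≤ 100 ^ n := one_le_pow₀ (by norm_num)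
      have hmem : T0z (Int.negSucc n) y ∈ Kplus C :=
        Or.inr (Set.mem_iUnion.2 ⟨Int.negSucc n, ⟨y, hy, rfl⟩⟩)
      rcases hy with ⟨z, hz, rfl⟩ | ⟨z, hz, rfl⟩
      · -- y = T1 z ∈ [98/100, 1]
        have hz' := hsub hz
        have h98 : (98 : ℝ) / 100 ≤ T1 z := by
          simp only [T1]; cases hz'; linarith
        have hgt : 1 < T0z (Int.negSucc n) (T1 z) := by
          rw [hxval, pow_succ]
          nlinarith
        rw [hg_id _ (Or.inr hgt)]
        exact hmem
      · have hz' := hsub hz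
        have h98 : Tm1 z ≤ -(98 : ℝ) / 100 := by
          simp only [Tm1]; cases hz'; linarith
        have hlt : T0z (Int.negSucc n) (Tm1 z) < -10 := by
          rw [hxval, pow_succ]
          nlinarith
        rw [hg_id _ (Or.inl hlt)]
        exact hmem
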